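/- arXiv:1202.2914 — 6 statements merged into one kernel-verified Lean document; each statement's English description precedes it below -/
import Mathlib

section
/- Lemma 1 (ta to vb arrival curves). Suppose a flow A has a ta stochastic arrival curve, A ~_ta <f, α>, and let δ > 0 be such that the function f̃(x) := Σ_{k=0}^∞ f(x + kδ) is finite for every x ≥ 0. Then A has a vb stochastic arrival curve A ~_vb <f̃, α_δ>, where α_δ(t) := α(t) + δ·t; that is, for all t ≥ 0 and all x ≥ 0, P{ max_{0≤s≤t} [A(s,t) − α_δ(t−s)] > x } ≤ f̃(x). -/
open MeasureTheory Filter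

/-- **Lemma 1 (ta to vb arrival curves).**
If a flow `A` has a ta stochastic arrival curve `⟨f, α⟩` and `δ > 0` is such that
`f̃(x) := ∑_{k=0}^∞ f(x + kδ)` is finite for every `x ≥ 0`, then `A` has the vb stochastic
arrival curve `⟨f̃, α_δ⟩`, where `α_δ(t) = α(t) + δ·t`. -/
theorem ta_to_vb_arrival_curve
    {Ω : Type*} [MeasurableSpace Ω] (P : Measure Ω) [IsProbabilityMeasure P]
    (A : ℕ → Ω → ℝ)
    (hA0 : ∀ ω, A 0 ω = 0)
    (hAnonneg : ∀ t ω, 0 ≤ A t ω)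
    (hAmono : ∀ ω, Monotone fun t => A t ω)
    (α : ℕ → ℝ) (f : ℝ → ℝ)
    (hαnonneg : ∀ t, 0 ≤ α t) (hαmono : Monotone α)
    (hfnonneg : ∀ x, 0 ≤ f x) (hfanti : Antitone f)
    (hta : ∀ s t : ℕ, s ≤ t → ∀ x : ℝ, 0 ≤ x →
      P {ω | A t ω - A s ω - α (t - s) > x} ≤ ENNReal.ofReal (f x))
    (δ : ℝ) (hδ : 0 < δ)
    (hsum : ∀ x : ℝ, 0 ≤ x → Summable fun k : ℕ => f (x + k * δ)) :
    ∀ t : ℕ, ∀ x : ℝ, 0 ≤ x →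
      P {ω | (Finset.range (t + 1)).sup' ⟨0, Finset.mem_range.mpr (Nat.succ_pos t)⟩
          (fun s => A t ω - A s ω - (α (t - s) + δ * ((t - s : ℕ) : ℝ))) > x}
        ≤ ENNReal.ofReal (∑' k : ℕ, f (x + k * δ)) := by
  intro t x hx
  have hsub : {ω | (Finset.range (t + 1)).sup' Finset.nonempty_range_add_one
          (fun s => A t ω - A s ω - (α (t - s) + δ * ((t - s : ℕ) : ℝ))) > x}
      ⊆ ⋃ s ∈ Finset.range (t + 1),
          {ω | A t ω - A s ω - α (t - s) > x + ((t - s : ℕ) : ℝ) * δ} := by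
    intro ω hω
    simp only [Set.mem_setOf_eq, gt_iff_lt, Finset.lt_sup'_iff] at hω
    obtain ⟨s, hs, hlt⟩ := hω
    refine Set.mem_biUnion hs ?_
    simp only [Set.mem_setOf_eq]
    linarith
  calc P _ ≤ ∑ s ∈ Finset.range (t + 1),
        P {ω | A t ω - A s ω - α (t - s) > x + ((t - s : ℕ) : ℝ) * δ} :=
      le_trans (measure_mono hsub) (measure_biUnion_finset_le _ _)
    _ ≤ ∑ s ∈ Finset.range (t + 1), ENNReal.ofReal (f (x + ((t - s : ℕ) : ℝ) * δ)) := by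
        refine Finset.sum_le_sum fun s hs => ?_
        have hs' : s ≤ t := Nat.lt_succ_iff.mp (Finset.mem_range.mp hs)
        exact hta s t hs' _ (by positivity)
    _ = ∑ k ∈ Finset.range (t + 1), ENNReal.ofReal (f (x + (k : ℝ) * δ)) := by
        rw [← Finset.sum_range_reflect (fun k => ENNReal.ofReal (f (x + (k : ℝ) * δ))) (t + 1)]
        refine Finset.sum_congr rfl fun s hs => ?_
        simp [Nat.succ_sub_one]
    _ = ENNReal.ofReal (∑ k ∈ Finset.range (t + 1), f (x + (k : ℝ) * δ)) := by
        rw [ENNReal.ofReal_sum_of_nonneg fun k _ => hfnonneg _]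
    _ ≤ ENNReal.ofReal (∑' k : ℕ, f (x + k * δ)) := by
        exact ENNReal.ofReal_le_ofReal
          (Summable.sum_le_tsum _ (fun k _ => hfnonneg _) (hsum x hx))
end

section
/- Theorem 1 (Jiang's leftover stochastic service curve). Suppose a server is a stochastic strict server with ideal service curve β̂ ∈ F and impairment process I, fed by a flow with arrival process A and departure process A*. If I has a vb stochastic arrival curve, I ~_vb <g, γ>, then the server provides the flow the (weak) stochastic service curve S ~ <g, β> with β(t) = β̂(t) − γ(t); that is, for all t ≥ 0 and all x ≥ 0, P{ min_{0≤s≤t} [A(s) + β̂(t−s) − γ(t−s)] − A*(t) > x } ≤ g(x). -/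
open MeasureTheory Filter

/-- **Theorem 1 (Jiang's leftover stochastic service curve).**
Suppose a server is a stochastic strict server with ideal service curve `β̂` and impairment
process `I`, fed by a flow with arrivals `A` and departures `A*`.  If `I` has a vb stochastic
arrival curve `⟨g, γ⟩`, then the server provides the (weak) stochastic service curve
`⟨g, β⟩` with `β(t) = β̂(t) − γ(t)`. -/
theorem jiang_leftover_service_curve
    {Ω : Type*} [MeasurableSpace Ω] (P : Measure Ω) [IsProbabilityMeasure P]
    (A Astar I : ℕ → Ω → ℝ)
    -- A is a process
    (hA0 : ∀ ω, A 0 ω = 0)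
    (hAnonneg : ∀ t ω, 0 ≤ A t ω)
    (hAmono : ∀ ω, Monotone fun t => A t ω)
    -- A* is a process with A* ≤ A
    (hAstar0 : ∀ ω, Astar 0 ω = 0)
    (hAstarnonneg : ∀ t ω, 0 ≤ Astar t ω)
    (hAstarmono : ∀ ω, Monotone fun t => Astar t ω)
    (hAstar_le : ∀ t ω, Astar t ω ≤ A t ω)
    -- I is a process
    (hI0 : ∀ ω, I 0 ω = 0)
    (hInonneg : ∀ t ω, 0 ≤ I t ω)
    (hImono : ∀ ω, Monotone fun t => I t ω)
    (βhat : ℕ → ℝ) (hβhat_nonneg : ∀ t, 0 ≤ βhat t) (hβhat_mono : Monotone βhat)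
    -- stochastic strict server: during every backlogged period (s, t],
    -- A*(s,t) ≥ β̂(t−s) − I(s,t)
    (hserver : ∀ ω, ∀ s t : ℕ, s ≤ t →
      (∀ u, s < u → u ≤ t → 0 < A u ω - Astar u ω) →
      βhat (t - s) - (I t ω - I s ω) ≤ Astar t ω - Astar s ω)
    (γ : ℕ → ℝ) (g : ℝ → ℝ)
    (hγnonneg : ∀ t, 0 ≤ γ t) (hγmono : Monotone γ)
    (hgnonneg : ∀ x, 0 ≤ g x) (hganti : Antitone g)
    -- I ~_vb <g, γ>
    (hvb : ∀ t : ℕ, ∀ x : ℝ, 0 ≤ x →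
      P {ω | (Finset.range (t + 1)).sup' Finset.nonempty_range_add_one
          (fun s => I t ω - I s ω - γ (t - s)) > x} ≤ ENNReal.ofReal (g x)) :
    -- S ~ <g, β> with β(t) = β̂(t) − γ(t)
    ∀ t : ℕ, ∀ x : ℝ, 0 ≤ x →
      P {ω | (Finset.range (t + 1)).inf' Finset.nonempty_range_add_one
          (fun s => A s ω + (βhat (t - s) - γ (t - s))) - Astar t ω > x}
        ≤ ENNReal.ofReal (g x) := by
  intro t x hx
  refine le_trans (measure_mono ?_) (hvb t x hx)
  intro ω hω
  simp only [Set.mem_setOf_eq] at hω ⊢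
  set Sset := (Finset.range (t+1)).filter (fun s => A s ω = Astar s ω) with hS
  have h0 : (0:ℕ) ∈ Sset := by
    simp [hS, Finset.mem_filter, hA0, hAstar0]
  have hne : Sset.Nonempty := ⟨0, h0⟩
  set s₀ := Sset.max' hne with hs0
  have hs0mem : s₀ ∈ Sset := Sset.max'_mem hne
  obtain ⟨hs0lt, hs0eq⟩ := Finset.mem_filter.mp hs0mem
  rw [Finset.mem_range] at hs0lt
  have hs0le : s₀ ≤ t := Nat.lt_succ_iff.mp hs0lt
  have hbacklog : ∀ u, s₀ < u → u ≤ t → 0 < A u ω - Astar u ω := by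
    intro u hu1 hu2
    have hle := hAstar_le u ω
    rcases lt_or_eq_of_le hle with h | h
    · linarith
    · exfalso
      have hmem : u ∈ Sset := by
        simp [hS, Finset.mem_filter, Finset.mem_range, Nat.lt_succ_iff.mpr hu2, h.symm]
      exact absurd (Finset.le_max' _ _ hmem) (not_le.mpr hu1)
  have hserv := hserver ω s₀ t hs0le hbacklog
  have hinf_le : (Finset.range (t + 1)).inf' Finset.nonempty_range_add_one
      (fun s => A s ω + (βhat (t - s) - γ (t - s))) ≤
      A s₀ ω + (βhat (t - s₀) - γ (t - s₀)) :=
    Finset.inf'_le (fun s => A s ω + (βhat (t - s) - γ (t - s))) (Finset.mem_range.mpr hs0lt)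
  have hsup_ge : I t ω - I s₀ ω - γ (t - s₀) ≤
      (Finset.range (t + 1)).sup' Finset.nonempty_range_add_one
      (fun s => I t ω - I s ω - γ (t - s)) :=
    Finset.le_sup' (fun s => I t ω - I s ω - γ (t - s)) (Finset.mem_range.mpr hs0lt)
  linarith
end

section
/- Theorem 5, vb part (arrival curves from (σ(θ), ρ(θ))-upper constrained processes). Suppose the process A is (σ(θ), ρ(θ))-upper constrained for some θ > 0. Then for any r > ρ(θ), A has a vb stochastic arrival curve A ~_vb <f, α> with α(t) = r·t and f(x) = (e^{θσ(θ)} / (1 − e^{θ(ρ(θ)−r)})) · e^{−θx}; that is, for all t ≥ 0 and all x ≥ 0, P{ max_{0≤s≤t} [A(s,t) − r(t−s)] > x } ≤ (e^{θσ(θ)} / (1 − e^{θ(ρ(θ)−r)})) e^{−θx}. -/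
open MeasureTheory Filter

/-- **Theorem 5, vb part (arrival curves from `(σ(θ), ρ(θ))`-upper constrained processes).**
If the process `A` is `(σ(θ), ρ(θ))`-upper constrained for some `θ > 0`, then for any
`r > ρ(θ)`, `A` has the vb stochastic arrival curve `α(t) = r·t`,
`f(x) = (e^{θσ(θ)} / (1 − e^{θ(ρ(θ)−r)})) e^{−θx}`. -/
theorem vb_arrival_curve_of_upper_constrained
    {Ω : Type*} [MeasurableSpace Ω] (P : Measure Ω) [IsProbabilityMeasure P]
    (A : ℕ → Ω → ℝ)
    (hA0 : ∀ ω, A 0 ω = 0)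
    (hAnonneg : ∀ t ω, 0 ≤ A t ω)
    (hAmono : ∀ ω, Monotone fun t => A t ω)
    (θ σ ρ : ℝ) (hθ : 0 < θ)
    (hInt : ∀ s t : ℕ, s ≤ t → Integrable (fun ω => Real.exp (θ * (A t ω - A s ω))) P)
    -- A is (σ(θ), ρ(θ))-upper constrained
    (hconstr : ∀ s t : ℕ, s ≤ t →
      (1 / θ) * Real.log (∫ ω, Real.exp (θ * (A t ω - A s ω)) ∂P)
        ≤ ρ * ((t - s : ℕ) : ℝ) + σ)
    (r : ℝ) (hr : ρ < r) :
    ∀ t : ℕ, ∀ x : ℝ, 0 ≤ x →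
      P {ω | (Finset.range (t + 1)).sup' Finset.nonempty_range_add_one
          (fun s => A t ω - A s ω - r * ((t - s : ℕ) : ℝ)) > x}
        ≤ ENNReal.ofReal
            (Real.exp (θ * σ) / (1 - Real.exp (θ * (ρ - r))) * Real.exp (-θ * x)) := by
  intro t x hx
  set q : ℝ := Real.exp (θ * (ρ - r)) with hq
  have hq0 : 0 < q := Real.exp_pos _
  have hq1 : q < 1 := by
    rw [hq, Real.exp_lt_one_iff]
    exact mul_neg_of_pos_of_neg hθ (by linarith)
  -- per-term Chernoff bound
  have key : ∀ s ∈ Finset.range (t + 1),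
      P {ω | x + r * ((t - s : ℕ) : ℝ) < A t ω - A s ω}
        ≤ ENNReal.ofReal (Real.exp (θ * σ) * q ^ (t - s) * Real.exp (-θ * x)) := by
    intro s hs
    have hst : s ≤ t := Nat.lt_succ_iff.mp (Finset.mem_range.mp hs)
    set k : ℝ := ((t - s : ℕ) : ℝ) with hk
    have hk0 : 0 ≤ k := Nat.cast_nonneg _
    set g : Ω → ℝ := fun ω => Real.exp (θ * (A t ω - A s ω)) with hg
    have hgi : Integrable g P := hInt s t hst
    have hgm : AEMeasurable (fun ω => ENNReal.ofReal (g ω)) P :=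
      hgi.aestronglyMeasurable.aemeasurable.ennreal_ofReal
    set I : ℝ := ∫ ω, g ω ∂P with hI
    have hIle : I ≤ Real.exp (θ * (ρ * k + σ)) := by
      rcases le_or_gt I 0 with h | h
      · exact h.trans (Real.exp_pos _).le
      · have := hconstr s t hst
        have hlog : Real.log I ≤ θ * (ρ * k + σ) := by
          rw [mul_comm ρ k] at this ⊢
          have h2 : Real.log I ≤ θ * (k * ρ + σ) := by
            have := (div_le_iff₀' hθ).mp (by simpa [one_div, div_eq_inv_mul] using this)
            linarith
          linarith
        calc I = Real.exp (Real.log I) := (Real.exp_log h).symm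
          _ ≤ _ := Real.exp_le_exp.mpr hlog
    set y : ℝ := x + r * k with hy
    have hsub : {ω | y < A t ω - A s ω} ⊆
        {ω | ENNReal.ofReal (Real.exp (θ * y)) ≤ ENNReal.ofReal (g ω)} := by
      intro ω hω
      exact ENNReal.ofReal_le_ofReal (Real.exp_le_exp.mpr
        (mul_le_mul_of_nonneg_left (le_of_lt hω) hθ.le))
    have markov := mul_meas_ge_le_lintegral₀ hgm (ENNReal.ofReal (Real.exp (θ * y)))
    have hlint : ∫⁻ ω, ENNReal.ofReal (g ω) ∂P = ENNReal.ofReal I :=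
      (ofReal_integral_eq_lintegral_ofReal hgi
        (Filter.Eventually.of_forall fun ω => (Real.exp_pos _).le)).symm
    have hmeas : P {ω | y < A t ω - A s ω}
        ≤ ENNReal.ofReal I / ENNReal.ofReal (Real.exp (θ * y)) := by
      rw [ENNReal.le_div_iff_mul_le (Or.inl (by positivity)) (Or.inl ENNReal.ofReal_ne_top)]
      calc P {ω | y < A t ω - A s ω} * ENNReal.ofReal (Real.exp (θ * y))
          ≤ P {ω | ENNReal.ofReal (Real.exp (θ * y)) ≤ ENNReal.ofReal (g ω)}
              * ENNReal.ofReal (Real.exp (θ * y)) := by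
            exact mul_le_mul_left (measure_mono hsub) _
        _ = ENNReal.ofReal (Real.exp (θ * y))
              * P {ω | ENNReal.ofReal (Real.exp (θ * y)) ≤ ENNReal.ofReal (g ω)} := mul_comm _ _
        _ ≤ ∫⁻ ω, ENNReal.ofReal (g ω) ∂P := markov
        _ = ENNReal.ofReal I := hlint
    refine hmeas.trans ?_
    rw [← ENNReal.ofReal_div_of_pos (Real.exp_pos _)]
    apply ENNReal.ofReal_le_ofReal
    have hqk : q ^ (t - s) = Real.exp (θ * (ρ - r) * k) := by
      rw [hq, ← Real.exp_nat_mul, hk]; ring_nf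
    rw [hqk, div_le_iff₀ (Real.exp_pos _)]
    calc I ≤ Real.exp (θ * (ρ * k + σ)) := hIle
      _ = Real.exp (θ * σ) * Real.exp (θ * (ρ - r) * k) * Real.exp (-θ * x)
          * Real.exp (θ * y) := by
        rw [← Real.exp_add, ← Real.exp_add, ← Real.exp_add, hy]; ring_nf
  -- union bound
  have hset : {ω | (Finset.range (t + 1)).sup' Finset.nonempty_range_add_one
      (fun s => A t ω - A s ω - r * ((t - s : ℕ) : ℝ)) > x}
      = ⋃ s ∈ Finset.range (t + 1), {ω | x + r * ((t - s : ℕ) : ℝ) < A t ω - A s ω} := by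
    ext ω
    simp only [Set.mem_setOf_eq, gt_iff_lt, Finset.lt_sup'_iff, Set.mem_iUnion,
      Set.mem_setOf_eq, exists_prop]
    constructor
    · rintro ⟨s, hs, h⟩; exact ⟨s, hs, by linarith⟩
    · rintro ⟨s, hs, h⟩; exact ⟨s, hs, by linarith⟩
  rw [hset]
  calc P (⋃ s ∈ Finset.range (t + 1), {ω | x + r * ((t - s : ℕ) : ℝ) < A t ω - A s ω})
      ≤ ∑ s ∈ Finset.range (t + 1),
          P {ω | x + r * ((t - s : ℕ) : ℝ) < A t ω - A s ω} := measure_biUnion_finset_le _ _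
    _ ≤ ∑ s ∈ Finset.range (t + 1),
          ENNReal.ofReal (Real.exp (θ * σ) * q ^ (t - s) * Real.exp (-θ * x)) :=
        Finset.sum_le_sum key
    _ = ENNReal.ofReal (∑ s ∈ Finset.range (t + 1),
          Real.exp (θ * σ) * q ^ (t - s) * Real.exp (-θ * x)) := by
        rw [ENNReal.ofReal_sum_of_nonneg]
        intro s _; positivity
    _ ≤ ENNReal.ofReal (Real.exp (θ * σ) / (1 - q) * Real.exp (-θ * x)) := by
        apply ENNReal.ofReal_le_ofReal
        have hsum : ∑ s ∈ Finset.range (t + 1), q ^ (t - s)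
            = ∑ k ∈ Finset.range (t + 1), q ^ k := by
          rw [← Finset.sum_range_reflect]
          apply Finset.sum_congr rfl
          intro i hi
          have hi' := Finset.mem_range.mp hi
          congr 1
          omega
        have hle : ∑ k ∈ Finset.range (t + 1), q ^ k ≤ (1 - q)⁻¹ := by
          rw [← tsum_geometric_of_lt_one hq0.le hq1]
          exact Summable.sum_le_tsum _ (fun i _ => by positivity)
            (summable_geometric_of_lt_one hq0.le hq1)
        calc ∑ s ∈ Finset.range (t + 1), Real.exp (θ * σ) * q ^ (t - s) * Real.exp (-θ * x)
            = Real.exp (θ * σ) * (∑ s ∈ Finset.range (t + 1), q ^ (t - s))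
              * Real.exp (-θ * x) := by
              simp [Finset.mul_sum, Finset.sum_mul]
          _ ≤ Real.exp (θ * σ) * (1 - q)⁻¹ * Real.exp (-θ * x) := by
              have := hsum ▸ hle
              apply mul_le_mul_of_nonneg_right _ (Real.exp_pos _).le
              exact mul_le_mul_of_nonneg_left this (Real.exp_pos _).le
          _ = Real.exp (θ * σ) / (1 - q) * Real.exp (-θ * x) := by
              rw [div_eq_mul_inv]
end

section
/- Proposition 1 (vb arrival curves of time-independent processes). Suppose the process A is (σ(θ), ρ(θ))-upper constrained for some θ > 0, and suppose the per-slot increments a(t) := A(t) − A(t−1), t ≥ 1, are mutually independent random variables. Then for any r ≥ ρ(θ) + σ(θ), A has a vb stochastic arrival curve A ~_vb <f, α> with α(t) = r·t and f(x) = e^{−θx}; that is, for all t ≥ 0 and all x ≥ 0, P{ max_{0≤s≤t} [A(s,t) − r(t−s)] > x } ≤ e^{−θx}. -/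
open MeasureTheory ProbabilityTheory Filter

private lemma telescope_sum {f : ℕ → ℝ} {m n : ℕ} (h : m ≤ n) :
    ∑ i ∈ Finset.Ico m n, (f (i + 1) - f i) = f n - f m := by
  rw [Finset.sum_Ico_eq_sub _ h, Finset.sum_range_sub, Finset.sum_range_sub]
  ring

/-- **Proposition 1 (vb arrival curves of time-independent processes).**
If the process `A` is `(σ(θ), ρ(θ))`-upper constrained for some `θ > 0` and its per-slot
increments `a(t) = A(t) − A(t−1)` are mutually independent, then for any
`r ≥ ρ(θ) + σ(θ)`, `A` has the vb stochastic arrival curve `α(t) = r·t`, `f(x) = e^{−θx}`. -/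
theorem vb_arrival_curve_time_independent
    {Ω : Type*} [MeasurableSpace Ω] (P : Measure Ω) [IsProbabilityMeasure P]
    (A : ℕ → Ω → ℝ)
    (hA0 : ∀ ω, A 0 ω = 0)
    (hAnonneg : ∀ t ω, 0 ≤ A t ω)
    (hAmono : ∀ ω, Monotone fun t => A t ω)
    (hAmeas : ∀ t, Measurable (A t))
    (θ σ ρ : ℝ) (hθ : 0 < θ)
    (hInt : ∀ s t : ℕ, s ≤ t → Integrable (fun ω => Real.exp (θ * (A t ω - A s ω))) P)
    -- A is (σ(θ), ρ(θ))-upper constrained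
    (hconstr : ∀ s t : ℕ, s ≤ t →
      (1 / θ) * Real.log (∫ ω, Real.exp (θ * (A t ω - A s ω)) ∂P)
        ≤ ρ * ((t - s : ℕ) : ℝ) + σ)
    -- the per-slot increments a(t) = A(t) − A(t−1) are mutually independent
    (hindep : iIndepFun
      (fun t : ℕ => fun ω => A (t + 1) ω - A t ω) P)
    (r : ℝ) (hr : ρ + σ ≤ r) :
    ∀ t : ℕ, ∀ x : ℝ, 0 ≤ x →
      P {ω | (Finset.range (t + 1)).sup' Finset.nonempty_range_add_one
          (fun s => A t ω - A s ω - r * ((t - s : ℕ) : ℝ)) > x}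
        ≤ ENNReal.ofReal (Real.exp (-θ * x)) := by
  classical
  intro t x hx
  set X : ℕ → Ω → ℝ := fun i ω => A (i + 1) ω - A i ω with hXdef
  have hXmeas : ∀ i, Measurable (X i) := fun i => (hAmeas (i + 1)).sub (hAmeas i)
  -- single-factor bound : E[e^{θ(a_j - r)}] ≤ 1
  have hfac : ∀ j : ℕ, ∫⁻ ω, ENNReal.ofReal (Real.exp (θ * (X j ω - r))) ∂P ≤ 1 := by
    intro j
    have hint := hInt j (j + 1) (Nat.le_succ j)
    set I : ℝ := ∫ ω, Real.exp (θ * (A (j + 1) ω - A j ω)) ∂P with hIdef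
    have hI1 : (1 : ℝ) ≤ I := by
      have : (1 : ℝ) = ∫ _ω, (1 : ℝ) ∂P := by simp
      rw [this]
      refine integral_mono (integrable_const 1) hint fun ω => ?_
      have h0 : 0 ≤ θ * (A (j + 1) ω - A j ω) :=
        mul_nonneg hθ.le (sub_nonneg.mpr (hAmono ω (Nat.le_succ j)))
      simpa using Real.one_le_exp h0
    have hlog := hconstr j (j + 1) (Nat.le_succ j)
    have hcast : (((j + 1 : ℕ) - j : ℕ) : ℝ) = 1 := by
      norm_num
    rw [hcast] at hlog
    have hlog' : Real.log I ≤ θ * r := by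
      have h1 : (1 / θ) * Real.log I ≤ r := le_trans hlog (by linarith)
      rw [one_div] at h1
      exact (inv_mul_le_iff₀ hθ).mp h1
    have hIle : I ≤ Real.exp (θ * r) := by
      calc I = Real.exp (Real.log I) := (Real.exp_log (by linarith)).symm
        _ ≤ Real.exp (θ * r) := Real.exp_le_exp.mpr hlog'
    have hptw : ∀ ω, Real.exp (θ * (X j ω - r))
        = Real.exp (θ * (A (j + 1) ω - A j ω)) * Real.exp (-(θ * r)) := by
      intro ω
      rw [← Real.exp_add]
      congr 1
      simp only [hXdef]
      ring
    calc ∫⁻ ω, ENNReal.ofReal (Real.exp (θ * (X j ω - r))) ∂P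
        = ∫⁻ ω, ENNReal.ofReal (Real.exp (θ * (A (j + 1) ω - A j ω)))
            * ENNReal.ofReal (Real.exp (-(θ * r))) ∂P := by
          refine lintegral_congr fun ω => ?_
          rw [hptw ω, ENNReal.ofReal_mul (Real.exp_nonneg _)]
      _ = (∫⁻ ω, ENNReal.ofReal (Real.exp (θ * (A (j + 1) ω - A j ω))) ∂P)
            * ENNReal.ofReal (Real.exp (-(θ * r))) := by
          exact lintegral_mul_const _
            (ENNReal.measurable_ofReal.comp (((hAmeas (j + 1)).sub (hAmeas j)).const_mul θ).exp)
      _ = ENNReal.ofReal I * ENNReal.ofReal (Real.exp (-(θ * r))) := by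
          rw [← ofReal_integral_eq_lintegral_ofReal hint
            (ae_of_all _ fun ω => Real.exp_nonneg _)]
      _ ≤ ENNReal.ofReal (Real.exp (θ * r)) * ENNReal.ofReal (Real.exp (-(θ * r))) :=
          mul_le_mul_left (ENNReal.ofReal_le_ofReal hIle) _
      _ = ENNReal.ofReal (Real.exp (θ * r) * Real.exp (-(θ * r))) :=
          (ENNReal.ofReal_mul (Real.exp_nonneg _)).symm
      _ = 1 := by rw [← Real.exp_add]; simp
  -- the supermartingale-like process
  set g : ℕ → Ω → ℝ := fun k ω => A t ω - A (t - k) ω - r * (k : ℝ) with hgdef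
  have hgmeas : ∀ k, Measurable (g k) :=
    fun k => ((hAmeas t).sub (hAmeas (t - k))).sub measurable_const
  set M : ℕ → Ω → ENNReal := fun k ω => ENNReal.ofReal (Real.exp (θ * g k ω)) with hMdef
  have hMmeas : ∀ k, Measurable (M k) :=
    fun k => ENNReal.measurable_ofReal.comp ((hgmeas k).const_mul θ).exp
  set D : ℕ → Set Ω := fun n => {ω | ∀ j ≤ n, g j ω ≤ x} with hDdef
  set E : ℕ → Set Ω := fun k => {ω | x < g k ω ∧ ∀ j < k, g j ω ≤ x} with hEdef
  have hDmeas : ∀ n, MeasurableSet (D n) := by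
    intro n
    have : D n = ⋂ j, ⋂ (_ : j ≤ n), {ω | g j ω ≤ x} := by
      ext ω; simp [hDdef]
    rw [this]
    exact MeasurableSet.iInter fun j => MeasurableSet.iInter fun _ =>
      measurableSet_le (hgmeas j) measurable_const
  have hEmeas : ∀ k, MeasurableSet (E k) := by
    intro k
    have : E k = {ω | x < g k ω} ∩ ⋂ j, ⋂ (_ : j < k), {ω | g j ω ≤ x} := by
      ext ω; simp [hEdef]
    rw [this]
    exact (measurableSet_lt measurable_const (hgmeas k)).inter
      (MeasurableSet.iInter fun j => MeasurableSet.iInter fun _ =>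
        measurableSet_le (hgmeas j) measurable_const)
  -- sum representation of increments
  have hsum : ∀ k ≤ t, ∀ ω, A t ω - A (t - k) ω = ∑ i ∈ Finset.Ico (t - k) t, X i ω := by
    intro k _ ω
    exact (telescope_sum (f := fun i => A i ω) (Nat.sub_le t k)).symm
  -- the key supermartingale step
  have hstep : ∀ n, n < t → ∫⁻ ω in D n, M (n + 1) ω ∂P ≤ ∫⁻ ω in D n, M n ω ∂P := by
    intro n hn
    set S : Finset ℕ := Finset.Ico (t - n) t with hSdef
    set j : ℕ := t - (n + 1) with hjdef
    have hj1 : j + 1 = t - n := by omega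
    have hjS : j ∉ S := by simp [hSdef, hjdef]; omega
    -- multiplicative decomposition
    have hfact : ∀ ω, M (n + 1) ω
        = M n ω * ENNReal.ofReal (Real.exp (θ * (X j ω - r))) := by
      intro ω
      rw [hMdef]
      simp only
      rw [← ENNReal.ofReal_mul (Real.exp_nonneg _), ← Real.exp_add]
      congr 2
      have hXj : X j ω = A (t - n) ω - A (t - (n + 1)) ω := by
        simp only [hXdef]
        rw [hj1]
      rw [hXj]
      simp only [hgdef, hjdef]
      push_cast
      ring
    have hIeq : (D n).indicator (M (n + 1))
        = fun ω => (D n).indicator (M n) ω * ENNReal.ofReal (Real.exp (θ * (X j ω - r))) := by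
      funext ω
      by_cases hω : ω ∈ D n <;> simp [Set.indicator, hω, hfact ω]
    -- independence
    have hdisj : Disjoint S ({j} : Finset ℕ) := by
      simp [Finset.disjoint_singleton_right, hjS]
    have hindep1 := hindep.indepFun_finset S {j} hdisj hXmeas
    -- express indicator ∘ M n as a function of the tuple over S
    set u : (S → ℝ) → ℕ → ℝ := fun v i => if h : i ∈ S then v ⟨i, h⟩ else 0 with hudef
    have humeas : ∀ i, Measurable fun v : S → ℝ => u v i := by
      intro i
      by_cases h : i ∈ S
      · simpa [hudef, h] using measurable_pi_apply (⟨i, h⟩ : S)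
      · simpa [hudef, h] using measurable_const
    set G : (S → ℝ) → ℕ → ℝ := fun v k => (∑ i ∈ Finset.Ico (t - k) t, u v i) - r * k
      with hGdef
    have hGmeas : ∀ k, Measurable fun v : S → ℝ => G v k := by
      intro k
      exact (Finset.measurable_sum _ fun i _ => humeas i).sub measurable_const
    set φ : (S → ℝ) → ENNReal := fun v =>
      Set.indicator {v : S → ℝ | ∀ j' ≤ n, G v j' ≤ x}
        (fun v => ENNReal.ofReal (Real.exp (θ * G v n))) v with hφdef
    have hφmeas : Measurable φ := by
      refine Measurable.indicator
        (ENNReal.measurable_ofReal.comp ((hGmeas n).const_mul θ).exp) ?_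
      have : {v : S → ℝ | ∀ j' ≤ n, G v j' ≤ x}
          = ⋂ j', ⋂ (_ : j' ≤ n), {v | G v j' ≤ x} := by
        ext v; simp
      rw [this]
      exact MeasurableSet.iInter fun j' => MeasurableSet.iInter fun _ =>
        measurableSet_le (hGmeas j') measurable_const
    have hGeq : ∀ k ≤ n, ∀ ω, G (fun i : S => X (i : ℕ) ω) k = g k ω := by
      intro k hk ω
      have hsub : Finset.Ico (t - k) t ⊆ S := by
        rw [hSdef]
        exact Finset.Ico_subset_Ico (by omega) le_rfl
      have : ∑ i ∈ Finset.Ico (t - k) t, u (fun i : S => X (i : ℕ) ω) i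
          = ∑ i ∈ Finset.Ico (t - k) t, X i ω := by
        refine Finset.sum_congr rfl fun i hi => ?_
        rw [hudef]
        simp only
        rw [dif_pos (hsub hi)]
      rw [hGdef]
      simp only
      rw [this, ← hsum k (by omega) ω, hgdef]
    have hcomp1 : (D n).indicator (M n) = φ ∘ fun ω (i : S) => X (i : ℕ) ω := by
      funext ω
      have hmem : ((fun i : S => X (i : ℕ) ω) ∈ {v : S → ℝ | ∀ j' ≤ n, G v j' ≤ x})
          ↔ ω ∈ D n := by
        simp only [Set.mem_setOf_eq, hDdef]
        constructor
        · intro h j' hj'; rw [← hGeq j' hj' ω]; exact h j' hj'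
        · intro h j' hj'; rw [hGeq j' hj' ω]; exact h j' hj'
      by_cases hω : ω ∈ D n
      · rw [Set.indicator_of_mem hω]
        have hval : φ (fun i : S => X (i : ℕ) ω)
            = ENNReal.ofReal (Real.exp (θ * G (fun i : S => X (i : ℕ) ω) n)) :=
          Set.indicator_of_mem (hmem.mpr hω) _
        simp only [Function.comp_apply, hval, hGeq n le_rfl ω, hMdef]
      · rw [Set.indicator_of_notMem hω]
        simp only [Function.comp_apply, hφdef]
        rw [Set.indicator_of_notMem (fun hc => hω (hmem.mp hc))]
    set ψ : (({j} : Finset ℕ) → ℝ) → ENNReal := fun v =>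
      ENNReal.ofReal (Real.exp (θ * (v ⟨j, Finset.mem_singleton_self j⟩ - r))) with hψdef
    have hψmeas : Measurable ψ :=
      ENNReal.measurable_ofReal.comp
        (show Measurable fun v : (({j} : Finset ℕ) → ℝ) =>
          Real.exp (θ * (v ⟨j, Finset.mem_singleton_self j⟩ - r)) by fun_prop)
    have hcomp2 : (fun ω => ENNReal.ofReal (Real.exp (θ * (X j ω - r))))
        = ψ ∘ fun ω (i : ({j} : Finset ℕ)) => X (i : ℕ) ω := by
      funext ω; rfl
    have hindep2 : IndepFun ((D n).indicator (M n))
        (fun ω => ENNReal.ofReal (Real.exp (θ * (X j ω - r)))) P := by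
      rw [hcomp1, hcomp2]
      exact hindep1.comp hφmeas hψmeas
    have hindmeas : Measurable ((D n).indicator (M n)) :=
      (hMmeas n).indicator (hDmeas n)
    calc ∫⁻ ω in D n, M (n + 1) ω ∂P
        = ∫⁻ ω, (D n).indicator (M (n + 1)) ω ∂P := (lintegral_indicator (hDmeas n) _).symm
      _ = ∫⁻ ω, (D n).indicator (M n) ω
            * ENNReal.ofReal (Real.exp (θ * (X j ω - r))) ∂P := by rw [hIeq]
      _ = (∫⁻ ω, (D n).indicator (M n) ω ∂P)
            * ∫⁻ ω, ENNReal.ofReal (Real.exp (θ * (X j ω - r))) ∂P :=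
          lintegral_mul_eq_lintegral_mul_lintegral_of_indepFun''
            hindmeas.aemeasurable
            (ENNReal.measurable_ofReal.comp
              (((hXmeas j).sub measurable_const).const_mul θ).exp).aemeasurable
            hindep2
      _ ≤ (∫⁻ ω, (D n).indicator (M n) ω ∂P) * 1 := mul_le_mul_right (hfac j) _
      _ = ∫⁻ ω in D n, M n ω ∂P := by rw [mul_one, lintegral_indicator (hDmeas n)]
  -- main induction
  have key : ∀ n, n ≤ t →
      (∑ k ∈ Finset.range (n + 1), ∫⁻ ω in E k, M k ω ∂P) + ∫⁻ ω in D n, M n ω ∂P ≤ 1 := by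
    intro n
    induction n with
    | zero =>
      intro _
      have hg0 : ∀ ω, g 0 ω = 0 := by
        intro ω; simp [hgdef]
      have hE0 : E 0 = ∅ := by
        ext ω
        simp only [hEdef, Set.mem_setOf_eq, Set.mem_empty_iff_false, iff_false, not_and]
        intro h
        rw [hg0 ω] at h
        exact absurd h (not_lt.mpr hx)
      have hD0 : D 0 = Set.univ := by
        ext ω
        simp only [hDdef, Set.mem_setOf_eq, Set.mem_univ, iff_true]
        intro j hj
        interval_cases j
        rw [hg0 ω]; exact hx
      have hM0 : M 0 = fun _ => 1 := by
        funext ω; simp [hMdef, hg0 ω]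
      rw [Finset.sum_range_one, hE0, hD0, hM0]
      simp [measure_univ]
    | succ n ih =>
      intro hn1
      have hn : n < t := by omega
      have ihn := ih (le_of_lt hn)
      have hunion : D n = E (n + 1) ∪ D (n + 1) := by
        ext ω
        simp only [hDdef, hEdef, Set.mem_setOf_eq, Set.mem_union]
        constructor
        · intro h
          by_cases hc : g (n + 1) ω ≤ x
          · right; intro j hj
            rcases Nat.lt_succ_iff_lt_or_eq.mp (Nat.lt_succ_of_le hj) with h' | h'
            · exact h j (by omega)
            · rw [h']; exact hc
          · left
            exact ⟨not_le.mp hc, fun j hj => h j (by omega)⟩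
        · rintro (⟨_, h2⟩ | h)
          · intro j hj; exact h2 j (by omega)
          · intro j hj; exact h j (by omega)
      have hdisj : Disjoint (E (n + 1)) (D (n + 1)) := by
        rw [Set.disjoint_left]
        intro ω hE hD
        exact absurd (hD (n + 1) le_rfl) (not_le.mpr hE.1)
      calc (∑ k ∈ Finset.range (n + 2), ∫⁻ ω in E k, M k ω ∂P)
            + ∫⁻ ω in D (n + 1), M (n + 1) ω ∂P
          = (∑ k ∈ Finset.range (n + 1), ∫⁻ ω in E k, M k ω ∂P)
            + ((∫⁻ ω in E (n + 1), M (n + 1) ω ∂P)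
              + ∫⁻ ω in D (n + 1), M (n + 1) ω ∂P) := by
            rw [Finset.sum_range_succ]; ring
        _ = (∑ k ∈ Finset.range (n + 1), ∫⁻ ω in E k, M k ω ∂P)
            + ∫⁻ ω in D n, M (n + 1) ω ∂P := by
            rw [hunion, lintegral_union (hDmeas (n + 1)) hdisj]
        _ ≤ (∑ k ∈ Finset.range (n + 1), ∫⁻ ω in E k, M k ω ∂P)
            + ∫⁻ ω in D n, M n ω ∂P := add_le_add_right (hstep n hn) _
        _ ≤ 1 := ihn
  -- covering the bad event by the E k
  have hsub : {ω | (Finset.range (t + 1)).sup' Finset.nonempty_range_add_one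
      (fun s => A t ω - A s ω - r * ((t - s : ℕ) : ℝ)) > x}
      ⊆ ⋃ k ∈ Finset.range (t + 1), E k := by
    intro ω hω
    simp only [Set.mem_setOf_eq, gt_iff_lt, Finset.lt_sup'_iff] at hω
    obtain ⟨s, hs, hgs⟩ := hω
    have hst : s ≤ t := Nat.lt_succ_iff.mp (Finset.mem_range.mp hs)
    have hbase : x < g (t - s) ω := by
      rw [hgdef]
      simp only
      rw [Nat.sub_sub_self hst]
      exact hgs
    have hex : ∃ k, x < g k ω := ⟨t - s, hbase⟩
    set k0 := Nat.find hex with hk0def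
    have hk0 : x < g k0 ω := Nat.find_spec hex
    have hk0le : k0 ≤ t := le_trans (Nat.find_min' hex hbase) (Nat.sub_le t s)
    refine Set.mem_biUnion (Finset.mem_range.mpr (Nat.lt_succ_of_le hk0le)) ?_
    exact ⟨hk0, fun j hj => not_lt.mp (Nat.find_min hex hj)⟩
  -- Markov bound on each E k
  set lam : ENNReal := ENNReal.ofReal (Real.exp (θ * x)) with hlamdef
  have hmark : ∀ k, lam * P (E k) ≤ ∫⁻ ω in E k, M k ω ∂P := by
    intro k
    have hpt : ∀ ω ∈ E k, lam ≤ M k ω := by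
      intro ω hω
      exact ENNReal.ofReal_le_ofReal (Real.exp_le_exp.mpr
        (mul_le_mul_of_nonneg_left hω.1.le hθ.le))
    calc lam * P (E k) = ∫⁻ _ω in E k, lam ∂P := (setLIntegral_const _ _).symm
      _ ≤ ∫⁻ ω in E k, M k ω ∂P := setLIntegral_mono (hMmeas k) hpt
  -- put everything together
  have hmain : lam * P {ω | (Finset.range (t + 1)).sup' Finset.nonempty_range_add_one
      (fun s => A t ω - A s ω - r * ((t - s : ℕ) : ℝ)) > x} ≤ 1 := by
    calc lam * P {ω | (Finset.range (t + 1)).sup' Finset.nonempty_range_add_one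
          (fun s => A t ω - A s ω - r * ((t - s : ℕ) : ℝ)) > x}
        ≤ lam * P (⋃ k ∈ Finset.range (t + 1), E k) :=
          mul_le_mul_right (measure_mono hsub) _
      _ ≤ lam * ∑ k ∈ Finset.range (t + 1), P (E k) :=
          mul_le_mul_right (measure_biUnion_finset_le _ _) _
      _ = ∑ k ∈ Finset.range (t + 1), lam * P (E k) := Finset.mul_sum _ _ _
      _ ≤ ∑ k ∈ Finset.range (t + 1), ∫⁻ ω in E k, M k ω ∂P :=
          Finset.sum_le_sum fun k _ => hmark k
      _ ≤ 1 := le_trans le_self_add (key t le_rfl)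
  have hfinal : P {ω | (Finset.range (t + 1)).sup' Finset.nonempty_range_add_one
      (fun s => A t ω - A s ω - r * ((t - s : ℕ) : ℝ)) > x} ≤ lam⁻¹ := by
    rw [ENNReal.le_inv_iff_mul_le]
    calc _ ≤ lam * P _ := by rw [mul_comm]
      _ ≤ 1 := hmain
  refine le_trans hfinal ?_
  rw [hlamdef, ← ENNReal.ofReal_inv_of_pos (Real.exp_pos _), ← Real.exp_neg]
  apply ENNReal.ofReal_le_ofReal
  rw [Real.exp_le_exp]
  ring_nf
  exact le_refl _
end

section
/- Supermartingale lemma (Appendix A, step of Proposition 1). Suppose the process A is (σ(θ), ρ(θ))-upper constrained for some θ > 0 and the per-slot increments a(s) := A(s) − A(s−1), s ≥ 1, are mutually independent random variables. Fix t ∈ ℕ and let r ≥ ρ(θ) + σ(θ). Then the process X(s) := e^{θ(A(t−s, t) − r·s)}, for s = 0, 1, ..., t, is a supermartingale with respect to its natural filtration, and E[X(0)] = 1. -/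
open MeasureTheory ProbabilityTheory Filter

private lemma tele_sum {f : ℕ → ℝ} {m n : ℕ} (h : m ≤ n) :
    ∑ k ∈ Finset.Ico m n, (f (k + 1) - f k) = f n - f m := by
  induction n, h using Nat.le_induction with
  | base => simp
  | succ n hmn ih => rw [Finset.sum_Ico_succ_top hmn, ih]; ring

/-- **Supermartingale lemma (Appendix A, step of Proposition 1).**
If `A` is `(σ(θ), ρ(θ))`-upper constrained for some `θ > 0` with mutually independent per-slot
increments, `t ∈ ℕ` is fixed and `r ≥ ρ(θ) + σ(θ)`, then `X(s) = e^{θ(A(t−s,t) − r·s)}`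
(for `s = 0, …, t`, and kept constant after time `t`) is a supermartingale with respect to its
natural filtration, and `E[X(0)] = 1`. -/
theorem supermartingale_of_upper_constrained
    {Ω : Type*} [MeasurableSpace Ω] (P : Measure Ω) [IsProbabilityMeasure P]
    (A : ℕ → Ω → ℝ)
    (hA0 : ∀ ω, A 0 ω = 0)
    (hAnonneg : ∀ t ω, 0 ≤ A t ω)
    (hAmono : ∀ ω, Monotone fun t => A t ω)
    (hAmeas : ∀ t, Measurable (A t))
    (θ σ ρ : ℝ) (hθ : 0 < θ)
    (hInt : ∀ s t : ℕ, s ≤ t → Integrable (fun ω => Real.exp (θ * (A t ω - A s ω))) P)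
    -- A is (σ(θ), ρ(θ))-upper constrained
    (hconstr : ∀ s t : ℕ, s ≤ t →
      (1 / θ) * Real.log (∫ ω, Real.exp (θ * (A t ω - A s ω)) ∂P)
        ≤ ρ * ((t - s : ℕ) : ℝ) + σ)
    -- the per-slot increments a(s) = A(s) − A(s−1) are mutually independent
    (hindep : iIndepFun
      (fun s : ℕ => fun ω => A (s + 1) ω - A s ω) P)
    (t : ℕ) (r : ℝ) (hr : ρ + σ ≤ r)
    -- X(s) = e^{θ(A(t−s,t) − r·s)} for s = 0, …, t (constant after s = t)
    (X : ℕ → Ω → ℝ)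
    (hX : ∀ s ω, X s ω =
      Real.exp (θ * ((A t ω - A (t - s) ω) - r * ((min s t : ℕ) : ℝ))))
    (hXmeas : ∀ s, StronglyMeasurable (X s)) :
    Supermartingale X (MeasureTheory.Filtration.natural X hXmeas) P ∧
      (∫ ω, X 0 ω ∂P) = 1 := by
  set a : ℕ → Ω → ℝ := fun s ω => A (s + 1) ω - A s ω with ha
  set F := MeasureTheory.Filtration.natural X hXmeas with hF
  -- Integrability of X s
  have hXrw : ∀ s, X s = fun ω =>
      Real.exp (θ * (A t ω - A (t - s) ω)) * Real.exp (-(θ * (r * ((min s t : ℕ) : ℝ)))) := by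
    intro s
    funext ω
    rw [hX s ω, ← Real.exp_add]
    ring_nf
  have hXint : ∀ s, Integrable (X s) P := by
    intro s
    rw [hXrw s]
    exact (hInt (t - s) t (Nat.sub_le _ _)).mul_const _
  -- natural filtration is contained in σ-algebra generated by the relevant increments
  have hnat_le : ∀ s : ℕ,
      (F s : MeasurableSpace Ω) ≤ ⨆ k ∈ Set.Ico (t - s) t, MeasurableSpace.comap (a k) inferInstance := by
    intro s
    refine iSup₂_le fun j hj => ?_
    refine measurable_iff_comap_le.1 ?_
    have htel : ∀ ω, ∑ k ∈ Finset.Ico (t - j) t, a k ω = A t ω - A (t - j) ω := fun ω =>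
      tele_sum (f := fun n => A n ω) (Nat.sub_le t j)
    have hsum : X j = fun ω =>
        Real.exp (θ * ((∑ k ∈ Finset.Ico (t - j) t, a k ω) - r * ((min j t : ℕ) : ℝ))) := by
      funext ω
      rw [hX j ω, htel ω]
    rw [hsum]
    have hak : ∀ k ∈ Finset.Ico (t - j) t,
        Measurable[⨆ k ∈ Set.Ico (t - s) t, MeasurableSpace.comap (a k) inferInstance] (a k) := by
      intro k hk
      simp only [Finset.mem_Ico] at hk
      refine measurable_iff_comap_le.2 (le_trans le_rfl ?_)
      refine le_iSup₂ (f := fun k (_ : k ∈ Set.Ico (t - s) t) => MeasurableSpace.comap (a k) inferInstance) k ?_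
      exact ⟨le_trans (Nat.sub_le_sub_left hj t) hk.1, hk.2⟩
    have : Measurable[⨆ k ∈ Set.Ico (t - s) t, MeasurableSpace.comap (a k) inferInstance]
        (fun ω => ∑ k ∈ Finset.Ico (t - j) t, a k ω) :=
      Finset.measurable_sum _ hak
    exact Real.measurable_exp.comp ((this.sub measurable_const).const_mul θ)
  -- Independence of the new increment from F s, when s < t
  have hindep_nat : ∀ s : ℕ, s < t →
      Indep (MeasurableSpace.comap (a (t - s - 1)) inferInstance) (F s) P := by
    intro s hst
    have h := indep_iSup_of_disjoint (m := fun k => MeasurableSpace.comap (a k) inferInstance)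
      (fun k => ((hAmeas (k + 1)).sub (hAmeas k)).comap_le) hindep
      (S := {t - s - 1}) (T := Set.Ico (t - s) t) (by
        simp only [Set.disjoint_singleton_left, Set.mem_Ico]
        omega)
    rw [iSup_singleton] at h
    exact indep_of_indep_of_le_right h (hnat_le s)
  -- main supermartingale step
  have hstep : ∀ s : ℕ, P[X (s + 1)|F s] ≤ᵐ[P] X s := by
    intro s
    by_cases hst : s < t
    · -- set Y
      set Y : Ω → ℝ := fun ω => Real.exp (θ * (a (t - s - 1) ω - r)) with hY
      have hts : t - s - 1 + 1 = t - s := by omega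
      have hYrw : Y = fun ω =>
          Real.exp (θ * (A (t - s) ω - A (t - s - 1) ω)) * Real.exp (-(θ * r)) := by
        funext ω
        rw [hY]
        simp only [ha, hts]
        rw [← Real.exp_add]
        ring_nf
      have hYint : Integrable Y P := by
        rw [hYrw]
        exact (hInt (t - s - 1) (t - s) (Nat.sub_le _ _)).mul_const _
      have hXsucc : X (s + 1) = fun ω => X s ω * Y ω := by
        funext ω
        rw [hX (s + 1) ω, hX s ω, hY, ← Real.exp_add]
        have h1 : min (s + 1) t = s + 1 := min_eq_left hst
        have h2 : min s t = s := min_eq_left hst.le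
        have h3 : A (t - s - 1 + 1) ω = A (t - s) ω := by rw [hts]
        have h5 : t - (s + 1) = t - s - 1 := by omega
        rw [h1, h2, h5]
        simp only [ha, h3]
        congr 1
        push_cast
        ring
      -- conditional expectation of Y given F s is constant = E[Y]
      have hYmeas1 : StronglyMeasurable[MeasurableSpace.comap Y inferInstance] Y :=
        (comap_measurable Y).stronglyMeasurable
      have hYcomap_le : MeasurableSpace.comap Y inferInstance
          ≤ MeasurableSpace.comap (a (t - s - 1)) inferInstance := by
        have : Y = (fun x : ℝ => Real.exp (θ * (x - r))) ∘ (a (t - s - 1)) := rfl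
        rw [this, ← MeasurableSpace.comap_comp]
        exact MeasurableSpace.comap_mono
          (measurable_iff_comap_le.1 (Real.measurable_exp.comp ((measurable_id.sub measurable_const).const_mul θ)))
      have hYindep : Indep (MeasurableSpace.comap Y inferInstance) (F s) P :=
        indep_of_indep_of_le_left (hindep_nat s hst) hYcomap_le
      have hYmeas0 : Measurable Y := by
        rw [hYrw]
        exact ((Real.measurable_exp.comp
          (((hAmeas (t - s)).sub (hAmeas (t - s - 1))).const_mul θ))).mul_const _
      have hYcond : P[Y|F s] =ᵐ[P] fun _ => ∫ ω, Y ω ∂P :=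
        condExp_indep_eq hYmeas0.comap_le (F.le s) hYmeas1 hYindep
      -- bound E[Y] ≤ 1
      have hIc : (1 : ℝ) ≤ ∫ ω, Real.exp (θ * (A (t - s) ω - A (t - s - 1) ω)) ∂P := by
        have hmono : ∀ ω, (1 : ℝ) ≤ Real.exp (θ * (A (t - s) ω - A (t - s - 1) ω)) := by
          intro ω
          refine Real.one_le_exp (mul_nonneg hθ.le (sub_nonneg.2 ?_))
          exact hAmono ω (Nat.sub_le _ _)
        calc (1 : ℝ) = ∫ _ω, (1 : ℝ) ∂P := by simp
          _ ≤ _ := integral_mono (integrable_const 1)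
              (hInt (t - s - 1) (t - s) (Nat.sub_le _ _)) hmono
      have hIpos : (0 : ℝ) < ∫ ω, Real.exp (θ * (A (t - s) ω - A (t - s - 1) ω)) ∂P :=
        lt_of_lt_of_le one_pos hIc
      have hlog := hconstr (t - s - 1) (t - s) (Nat.sub_le _ _)
      have h1' : (t - s) - (t - s - 1) = 1 := by omega
      rw [h1'] at hlog
      have hIle : (∫ ω, Real.exp (θ * (A (t - s) ω - A (t - s - 1) ω)) ∂P)
          ≤ Real.exp (θ * (ρ + σ)) := by
        rw [← Real.log_le_iff_le_exp hIpos]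
        have := mul_le_mul_of_nonneg_left hlog hθ.le
        have hθne : θ ≠ 0 := hθ.ne'
        calc Real.log (∫ ω, Real.exp (θ * (A (t - s) ω - A (t - s - 1) ω)) ∂P)
            = θ * ((1 / θ) * Real.log (∫ ω, Real.exp (θ * (A (t - s) ω - A (t - s - 1) ω)) ∂P)) := by
              field_simp
          _ ≤ θ * (ρ * ((1 : ℕ) : ℝ) + σ) := this
          _ = θ * (ρ + σ) := by norm_num
      have hEY : (∫ ω, Y ω ∂P) ≤ 1 := by
        rw [hYrw, integral_mul_const]
        calc (∫ ω, Real.exp (θ * (A (t - s) ω - A (t - s - 1) ω)) ∂P) * Real.exp (-(θ * r))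
            ≤ Real.exp (θ * (ρ + σ)) * Real.exp (-(θ * r)) :=
              mul_le_mul_of_nonneg_right hIle (Real.exp_nonneg _)
          _ = Real.exp (θ * (ρ + σ) + -(θ * r)) := (Real.exp_add _ _).symm
          _ ≤ 1 := by
              rw [Real.exp_le_one_iff]
              nlinarith
      have hXsucc' : X (s + 1) = X s * Y := hXsucc
      have hXsY : Integrable (X s * Y) P := by
        have h := hXint (s + 1); rwa [hXsucc'] at h
      have hmul : P[X s * Y|F s] =ᵐ[P] X s * P[Y|F s] := condExp_mul_of_stronglyMeasurable_left ((Filtration.stronglyAdapted_natural hXmeas) s)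
        hXsY hYint
      have hcond : P[X (s + 1)|F s] =ᵐ[P] fun ω => X s ω * (∫ ω', Y ω' ∂P) := by
        rw [hXsucc']
        filter_upwards [hmul, hYcond] with ω h1 h2
        rw [h1]
        simp only [Pi.mul_apply, h2]
      filter_upwards [hcond] with ω hω
      rw [hω]
      have hXpos : 0 ≤ X s ω := by rw [hX s ω]; exact Real.exp_nonneg _
      calc X s ω * (∫ ω', Y ω' ∂P) ≤ X s ω * 1 := mul_le_mul_of_nonneg_left hEY hXpos
        _ = X s ω := mul_one _
    · -- s ≥ t : X (s+1) = X s
      push_neg at hst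
      have hXeq : X (s + 1) = X s := by
        funext ω
        rw [hX (s + 1) ω, hX s ω]
        have h1 : t - (s + 1) = 0 := by omega
        have h2 : t - s = 0 := by omega
        have h3 : min (s + 1) t = t := min_eq_right (by omega)
        have h4 : min s t = t := min_eq_right hst
        rw [h1, h2, h3, h4]
      rw [hXeq, condExp_of_stronglyMeasurable (F.le s)
        ((Filtration.stronglyAdapted_natural hXmeas) s) (hXint s)]
  constructor
  · exact supermartingale_nat (Filtration.stronglyAdapted_natural hXmeas) hXint hstep
  · have : X 0 = fun _ => (1 : ℝ) := by
      funext ω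
      rw [hX 0 ω]
      simp
    rw [this]
    simp
end

section
/- Proposition 3 (equivalence of the optimized backlog bounds of Jiang's and Ciucu's models for a single server). Fix θ₁, θ₂ > 0, real constants σ_A, ρ_A, σ_I, ρ_I and c with ρ_A + ρ_I < c, and x ≥ 0. Define Jiang's optimized bound J(x) := inf over r_A > ρ_A, r_I > ρ_I with r_A + r_I = c of (f ⊗ g)(x), where f(y) = (e^{θ₁σ_A}/(1 − e^{θ₁(ρ_A − r_A)})) e^{−θ₁ y} and g(y) = (e^{θ₂σ_I}/(1 − e^{θ₂(ρ_I − r_I)})) e^{−θ₂ y}. Define Ciucu's optimized bound C(x) := inf over r_A ≥ ρ_A, r_I ≥ ρ_I, δ₁ > 0, δ₂ > 0 with r_A + r_I + δ₁ + δ₂ = c of (f̃ ⊗ g̃)(x), where f̃(y) = (e^{θ₁σ_A}/(1 − e^{−θ₁δ₁})) e^{−θ₁ y} and g̃(y) = (e^{θ₂σ_I}/(1 − e^{−θ₂δ₂})) e^{−θ₂ y}. Then J(x) = C(x). -/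
/-- Min-plus convolution of two bounding functions: `(f ⊗ g)(x) = inf_{0 ≤ y ≤ x} [f(y) + g(x−y)]`. -/
noncomputable def minConv (f g : ℝ → ℝ) (x : ℝ) : ℝ :=
  ⨅ y : Set.Icc (0 : ℝ) x, (f y.1 + g (x - y.1))

lemma minConv_nonneg {f g : ℝ → ℝ} {x : ℝ} (hx : 0 ≤ x)
    (hf : ∀ y, 0 ≤ f y) (hg : ∀ y, 0 ≤ g y) : 0 ≤ minConv f g x := by
  haveI : Nonempty (Set.Icc (0:ℝ) x) := ⟨⟨0, by simp [hx]⟩⟩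
  exact le_ciInf fun y => add_nonneg (hf _) (hg _)

lemma minConv_mono {f g f' g' : ℝ → ℝ} {x : ℝ} (hx : 0 ≤ x)
    (hf : ∀ y, 0 ≤ f y) (hg : ∀ y, 0 ≤ g y)
    (hff : ∀ y, f y ≤ f' y) (hgg : ∀ y, g y ≤ g' y) :
    minConv f g x ≤ minConv f' g' x := by
  haveI : Nonempty (Set.Icc (0:ℝ) x) := ⟨⟨0, by simp [hx]⟩⟩
  exact ciInf_mono ⟨0, by rintro _ ⟨y, rfl⟩; exact add_nonneg (hf _) (hg _)⟩
    fun y => add_le_add (hff _) (hgg _)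

lemma bound_nonneg {a : ℝ} (ha : a < 0) (b c : ℝ) :
    0 ≤ Real.exp b / (1 - Real.exp a) * Real.exp c := by
  have h1 : Real.exp a < 1 := Real.exp_lt_one_iff.mpr ha
  have := Real.exp_pos b
  have := Real.exp_pos c
  have h2 : 0 < 1 - Real.exp a := by linarith
  positivity

lemma bound_mono {a a' : ℝ} (ha : a ≤ a') (ha' : a' < 0) (b c : ℝ) :
    Real.exp b / (1 - Real.exp a) * Real.exp c ≤
      Real.exp b / (1 - Real.exp a') * Real.exp c := by
  have h1 : Real.exp a' < 1 := Real.exp_lt_one_iff.mpr ha'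
  have h2 : Real.exp a ≤ Real.exp a' := Real.exp_le_exp.mpr ha
  exact mul_le_mul_of_nonneg_right
    (div_le_div_of_nonneg_left (Real.exp_pos b).le (by linarith) (by linarith))
    (Real.exp_pos c).le

/-- **Proposition 3 (equivalence of the optimized backlog bounds of Jiang's and Ciucu's models
for a single server).**  For `θ₁, θ₂ > 0`, `ρ_A + ρ_I < c` and `x ≥ 0`, Jiang's optimized
backlog-bound expression equals Ciucu's optimized backlog-bound expression. -/
theorem jiang_ciucu_bounds_equivalent
    (θ₁ θ₂ σA ρA σI ρI c x : ℝ) (hθ₁ : 0 < θ₁) (hθ₂ : 0 < θ₂)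
    (hc : ρA + ρI < c) (hx : 0 ≤ x) :
    sInf {v : ℝ | ∃ rA rI : ℝ, ρA < rA ∧ ρI < rI ∧ rA + rI = c ∧
        v = minConv
          (fun y => Real.exp (θ₁ * σA) / (1 - Real.exp (θ₁ * (ρA - rA))) * Real.exp (-θ₁ * y))
          (fun y => Real.exp (θ₂ * σI) / (1 - Real.exp (θ₂ * (ρI - rI))) * Real.exp (-θ₂ * y))
          x}
      = sInf {v : ℝ | ∃ rA rI δ₁ δ₂ : ℝ, ρA ≤ rA ∧ ρI ≤ rI ∧ 0 < δ₁ ∧ 0 < δ₂ ∧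
          rA + rI + δ₁ + δ₂ = c ∧
          v = minConv
            (fun y => Real.exp (θ₁ * σA) / (1 - Real.exp (-θ₁ * δ₁)) * Real.exp (-θ₁ * y))
            (fun y => Real.exp (θ₂ * σI) / (1 - Real.exp (-θ₂ * δ₂)) * Real.exp (-θ₂ * y))
            x} := by
  set J := {v : ℝ | ∃ rA rI : ℝ, ρA < rA ∧ ρI < rI ∧ rA + rI = c ∧
        v = minConv
          (fun y => Real.exp (θ₁ * σA) / (1 - Real.exp (θ₁ * (ρA - rA))) * Real.exp (-θ₁ * y))
          (fun y => Real.exp (θ₂ * σI) / (1 - Real.exp (θ₂ * (ρI - rI))) * Real.exp (-θ₂ * y))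
          x} with hJ
  set C := {v : ℝ | ∃ rA rI δ₁ δ₂ : ℝ, ρA ≤ rA ∧ ρI ≤ rI ∧ 0 < δ₁ ∧ 0 < δ₂ ∧
          rA + rI + δ₁ + δ₂ = c ∧
          v = minConv
            (fun y => Real.exp (θ₁ * σA) / (1 - Real.exp (-θ₁ * δ₁)) * Real.exp (-θ₁ * y))
            (fun y => Real.exp (θ₂ * σI) / (1 - Real.exp (-θ₂ * δ₂)) * Real.exp (-θ₂ * y))
            x} with hC
  -- J ⊆ C
  have hsub : J ⊆ C := by
    rintro v ⟨rA, rI, h1, h2, h3, rfl⟩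
    refine ⟨ρA, ρI, rA - ρA, rI - ρI, le_refl _, le_refl _, by linarith, by linarith,
      by linarith, ?_⟩
    congr 1 <;> funext y <;>
      simp only [show -θ₁ * (rA - ρA) = θ₁ * (ρA - rA) by ring,
        show -θ₂ * (rI - ρI) = θ₂ * (ρI - rI) by ring]
  -- nonemptiness of J
  have hJne : J.Nonempty := by
    refine ⟨_, ρA + (c - ρA - ρI)/2, ρI + (c - ρA - ρI)/2, by linarith, by linarith,
      by ring, rfl⟩
  have hCne : C.Nonempty := hJne.mono hsub
  -- C bounded below by 0
  have hCbdd : ∀ v ∈ C, (0:ℝ) ≤ v := by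
    rintro v ⟨rA, rI, δ₁, δ₂, h1, h2, h3, h4, h5, rfl⟩
    exact minConv_nonneg hx (fun y => bound_nonneg (by nlinarith) _ _)
      (fun y => bound_nonneg (by nlinarith) _ _)
  have hJbdd : BddBelow J := ⟨0, fun v hv => hCbdd v (hsub hv)⟩
  apply le_antisymm
  · -- sInf J ≤ sInf C : for each element of C find smaller element of J
    apply le_csInf hCne
    rintro v ⟨rA, rI, δ₁, δ₂, h1, h2, h3, h4, h5, rfl⟩
    refine le_trans (csInf_le hJbdd (⟨rA + δ₁, rI + δ₂, by linarith, by linarith, by linarith,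
      rfl⟩ : _ ∈ J)) ?_
    exact minConv_mono hx
      (fun y => bound_nonneg (by nlinarith) _ _)
      (fun y => bound_nonneg (by nlinarith) _ _)
      (fun y => bound_mono (by nlinarith) (by nlinarith) _ _)
      (fun y => bound_mono (by nlinarith) (by nlinarith) _ _)
  · exact csInf_le_csInf ⟨0, fun v hv => hCbdd v hv⟩ hJne hsub
end
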